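/- Let G be a connected finite simple graph and let G' be a cluster graph (a disjoint union of complete graphs) on the same vertex set such that the symmetric difference of the edge sets of G and G' has at most k edges. Then (1) G' has at most k + 1 connected components, and (2) the neighborhood diversity of G is at most 3k + 1, i.e., V(G) can be partitioned into at most 3k + 1 classes such that any two vertices u, v in the same class satisfy N_G(u) \ {v} = N_G(v) \ {u}. -/

import Mathlib

open SimpleGraph

-- Part 1 as an auxiliary lemma
theorem aux_components {V : Type*} [Fintype V] (G G' : SimpleGraph V) (k : ℕ)
    (hGconn : G.Connected)
    (hedit : (symmDiff G.edgeSet G'.edgeSet).ncard ≤ k) :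
    Nat.card G'.ConnectedComponent ≤ k + 1 := by
  classical
  set D : Set (Sym2 V) := symmDiff G.edgeSet G'.edgeSet with hDdef
  set mk : V → G'.ConnectedComponent := G'.connectedComponentMk with hmk
  -- quotient graph
  let H : SimpleGraph G'.ConnectedComponent :=
    { Adj := fun c c' => c ≠ c' ∧ ∃ u v : V, G.Adj u v ∧ mk u = c ∧ mk v = c'
      symm := ⟨by rintro c c' ⟨hne, u, v, h, hu, hv⟩; exact ⟨hne.symm, v, u, h.symm, hv, hu⟩⟩
      loopless := ⟨fun c h => h.1 rfl⟩ }
  have hVne : Nonempty V := hGconn.nonempty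
  have hreach : ∀ u v : V, H.Reachable (mk u) (mk v) := by
    intro u v
    obtain ⟨p⟩ := hGconn.preconnected u v
    induction p with
    | nil => exact Reachable.refl _
    | @cons a b c h p ih =>
      refine Reachable.trans ?_ ih
      by_cases hc : mk a = mk b
      · rw [hc]
      · exact Adj.reachable ⟨hc, a, b, h, rfl, rfl⟩
  have hHconn : H.Connected := by
    rw [SimpleGraph.connected_iff]
    refine ⟨?_, ⟨mk (Classical.arbitrary V)⟩⟩
    · intro c c'
      induction c using SimpleGraph.ConnectedComponent.ind with
      | _ u =>
      induction c' using SimpleGraph.ConnectedComponent.ind with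
      | _ v => exact hreach u v
  obtain ⟨v₀⟩ := hVne
  set c₀ : G'.ConnectedComponent := mk v₀ with hc₀
  -- for each component ≠ c₀, find an adjacent component closer to c₀
  have key : ∀ c : G'.ConnectedComponent, c ≠ c₀ →
      ∃ c', H.Adj c c' ∧ H.dist c' c₀ + 1 = H.dist c c₀ := by
    intro c hc
    obtain ⟨p, hp⟩ := hHconn.exists_walk_length_eq_dist c c₀
    cases p with
    | nil => exact absurd rfl hc
    | @cons _ c' _ hadj q =>
      refine ⟨c', hadj, ?_⟩
      have h1 : H.dist c' c₀ ≤ q.length := SimpleGraph.dist_le q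
      have h2 : H.dist c c₀ ≤ H.dist c c' + H.dist c' c₀ := hHconn.dist_triangle
      have h3 : H.dist c c' ≤ 1 := by
        simpa using SimpleGraph.dist_le hadj.toWalk
      simp only [SimpleGraph.Walk.length_cons] at hp
      omega
  -- choose the edge of G witnessing H.Adj c (key c)
  have keyE : ∀ c : G'.ConnectedComponent, c ≠ c₀ →
      ∃ e : Sym2 V, e ∈ D ∧ ∃ u v : V, e = s(u, v) ∧ mk u = c ∧
        H.dist (mk v) c₀ + 1 = H.dist c c₀ := by
    intro c hc
    obtain ⟨c', hadj, hdist⟩ := key c hc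
    obtain ⟨hne, u, v, huv, hu, hv⟩ := hadj
    refine ⟨s(u, v), ?_, u, v, rfl, hu, by rwa [hv]⟩
    have hG : s(u, v) ∈ G.edgeSet := huv
    have hG' : s(u, v) ∉ G'.edgeSet := by
      intro h
      exact hne (hu ▸ hv ▸ SimpleGraph.ConnectedComponent.sound h.reachable)
    rw [hDdef, Set.mem_symmDiff]
    exact Or.inl ⟨hG, hG'⟩
  -- build the injection
  let F : G'.ConnectedComponent → Sym2 V := fun c =>
    if h : c ≠ c₀ then (keyE c h).choose else s(v₀, v₀)
  have hFmem : ∀ c ∈ {c | c ≠ c₀}, F c ∈ D := by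
    intro c hc
    replace hc : c ≠ c₀ := hc
    simp only [F, dif_pos hc]
    exact (keyE c hc).choose_spec.1
  have hFinj : Set.InjOn F {c | c ≠ c₀} := by
    intro c₁ h₁ c₂ h₂ heq
    replace h₁ : c₁ ≠ c₀ := h₁
    replace h₂ : c₂ ≠ c₀ := h₂
    simp only [F, dif_pos h₁, dif_pos h₂] at heq
    obtain ⟨-, u₁, w₁, he₁, hu₁, hd₁⟩ := (keyE c₁ h₁).choose_spec
    obtain ⟨-, u₂, w₂, he₂, hu₂, hd₂⟩ := (keyE c₂ h₂).choose_spec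
    rw [he₁, he₂] at heq
    rw [Sym2.eq_iff] at heq
    rcases heq with ⟨rfl, rfl⟩ | ⟨rfl, rfl⟩
    · rw [← hu₁, ← hu₂]
    · rw [hu₂] at hd₁
      rw [hu₁] at hd₂
      omega
  have hDfin : D.Finite := Set.toFinite _
  have h1 : ({c | c ≠ c₀} : Set G'.ConnectedComponent).ncard ≤ D.ncard :=
    Set.ncard_le_ncard_of_injOn F hFmem hFinj hDfin
  have h2 : (Set.univ : Set G'.ConnectedComponent) = insert c₀ {c | c ≠ c₀} := by
    ext c; by_cases h : c = c₀ <;> simp [h]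
  calc Nat.card G'.ConnectedComponent = (Set.univ : Set G'.ConnectedComponent).ncard :=
        (Set.ncard_univ _).symm
    _ = (insert c₀ {c | c ≠ c₀}).ncard := by rw [h2]
    _ ≤ ({c | c ≠ c₀} : Set G'.ConnectedComponent).ncard + 1 := Set.ncard_insert_le _ _
    _ ≤ k + 1 := by omega

/-- Let `G` be connected and `G'` a cluster graph (every connected
component is complete, i.e. any two distinct reachable vertices are adjacent) on the
same vertex set, with the symmetric difference of the edge sets having at most `k`
edges. Then (1) `G'` has at most `k + 1` connected components, and (2) the neighborhood
diversity of `G` is at most `3k + 1`: `V` can be partitioned into at most `3k + 1`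
classes such that any two vertices `u, v` in the same class satisfy
`N_G(u) \ {v} = N_G(v) \ {u}`. -/
theorem stmt_13 {V : Type*} [Fintype V] (G G' : SimpleGraph V) (k : ℕ)
    (hGconn : G.Connected)
    (hcluster : ∀ u v : V, G'.Reachable u v → u ≠ v → G'.Adj u v)
    (hedit : (symmDiff G.edgeSet G'.edgeSet).ncard ≤ k) :
    Nat.card G'.ConnectedComponent ≤ k + 1 ∧
    ∃ (d : ℕ) (f : V → Fin d), d ≤ 3 * k + 1 ∧
      ∀ u v : V, f u = f v → G.neighborSet u \ {v} = G.neighborSet v \ {u} := by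
  classical
  have hpart1 : Nat.card G'.ConnectedComponent ≤ k + 1 :=
    aux_components G G' k hGconn hedit
  refine ⟨hpart1, ?_⟩

  classical
  set D : Set (Sym2 V) := symmDiff G.edgeSet G'.edgeSet with hDdef
  have hDfin : D.Finite := Set.toFinite _
  set DF : Finset (Sym2 V) := hDfin.toFinset with hDF
  have hDFcard : DF.card ≤ k := by
    rwa [hDF, ← Set.ncard_eq_toFinset_card]
  set AF : Finset V := Finset.univ.filter (fun v => ∃ w, s(v, w) ∈ D) with hAF
  have hAFcard : AF.card ≤ 2 * k := by
    have hsub : AF ⊆ DF.biUnion (fun e => Finset.univ.filter (· ∈ e)) := by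
      intro v hv
      simp only [hAF, Finset.mem_filter, Finset.mem_univ, true_and] at hv
      obtain ⟨w, hw⟩ := hv
      simp only [Finset.mem_biUnion]
      exact ⟨s(v, w), by simpa [hDF] using hw, by simp⟩
    have hcard2 : ∀ e ∈ DF, (Finset.univ.filter (· ∈ e)).card ≤ 2 := by
      intro e _
      induction e with
      | _ a b =>
        have : (Finset.univ.filter (· ∈ s(a, b))) ⊆ {a, b} := by
          intro x hx
          simp only [Finset.mem_filter, Finset.mem_univ, true_and, Sym2.mem_iff] at hx
          simpa using hx
        calc (Finset.univ.filter (· ∈ s(a, b))).card ≤ ({a, b} : Finset V).card :=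
              Finset.card_le_card this
          _ ≤ 2 := Finset.card_le_two
    calc AF.card ≤ (DF.biUnion (fun e => Finset.univ.filter (· ∈ e))).card :=
          Finset.card_le_card hsub
      _ ≤ ∑ e ∈ DF, (Finset.univ.filter (· ∈ e)).card := Finset.card_biUnion_le
      _ ≤ ∑ _e ∈ DF, 2 := Finset.sum_le_sum hcard2
      _ = 2 * DF.card := by rw [Finset.sum_const, smul_eq_mul, mul_comm]
      _ ≤ 2 * k := by omega
  -- embeddings
  have he₁ : Nonempty ({v // v ∈ AF} ↪ Fin (2 * k)) := by
    apply Function.Embedding.nonempty_of_card_le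
    simpa using hAFcard
  have he₂ : Nonempty (G'.ConnectedComponent ↪ Fin (k + 1)) := by
    apply Function.Embedding.nonempty_of_card_le
    rw [Fintype.card_fin, ← Nat.card_eq_fintype_card]
    exact hpart1
  obtain ⟨e₁⟩ := he₁
  obtain ⟨e₂⟩ := he₂
  set mk : V → G'.ConnectedComponent := G'.connectedComponentMk with hmk
  refine ⟨3 * k + 1, fun v =>
    if h : v ∈ AF then ⟨(e₁ ⟨v, h⟩ : Fin (2 * k)).1, by have := (e₁ ⟨v, h⟩).2; omega⟩
    else ⟨2 * k + (e₂ (mk v) : Fin (k + 1)).1, by have := (e₂ (mk v)).2; omega⟩,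
    le_refl _, ?_⟩
  intro u v huv
  by_cases hu : u ∈ AF <;> by_cases hv : v ∈ AF <;>
    simp only [dif_pos, dif_neg, hu, hv, Fin.mk.injEq, dite_true, dite_false] at huv
  · -- both affected: u = v
    have : (⟨u, hu⟩ : {v // v ∈ AF}) = ⟨v, hv⟩ := e₁.injective (Fin.ext huv)
    obtain rfl : u = v := congrArg Subtype.val this
    rfl
  · have := (e₁ ⟨u, hu⟩).2
    omega
  · have := (e₁ ⟨v, hv⟩).2
    omega
  · -- both unaffected, same component
    have hcc : mk u = mk v := e₂.injective (Fin.ext (by omega))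
    -- unaffected vertex adjacency characterization
    have hadj : ∀ x, x ∉ AF → ∀ w, (G.Adj x w ↔ (mk w = mk x ∧ w ≠ x)) := by
      intro x hx w
      simp only [hAF, Finset.mem_filter, Finset.mem_univ, true_and, not_exists] at hx
      have hsame : G.Adj x w ↔ G'.Adj x w := by
        constructor
        · intro h
          by_contra h'
          exact hx w (Or.inl ⟨h, fun hc => h' hc⟩)
        · intro h
          by_contra h'
          exact hx w (Or.inr ⟨h, fun hc => h' hc⟩)
      rw [hsame]
      constructor
      · intro h
        exact ⟨(SimpleGraph.ConnectedComponent.sound h.reachable).symm, h.ne'⟩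
      · rintro ⟨hcc', hne⟩
        exact (hcluster w x (SimpleGraph.ConnectedComponent.exact hcc') hne).symm
    ext w
    simp only [Set.mem_diff, SimpleGraph.mem_neighborSet, Set.mem_singleton_iff,
      hadj u hu, hadj v hv, hcc]
    constructor
    · rintro ⟨⟨h1, h2⟩, h3⟩
      refine ⟨⟨h1, h3⟩, ?_⟩
      intro hwu
      exact h2 hwu
    · rintro ⟨⟨h1, h3⟩, h2⟩
      exact ⟨⟨h1, h2⟩, h3⟩
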